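/- Let n_1, n_2 ≥ 2 be integers, and let L be the graph Laplacian of the complete bipartite graph K_{n_1,n_2} (equivalently, of the 2-partite graph G_{n_1,n_2}). Then the cokernel ℤ^{n_1+n_2}/im L is isomorphic as an abelian group to ℤ ⊕ (ℤ/n_1ℤ)^{⊕(n_2−2)} ⊕ (ℤ/n_2ℤ)^{⊕(n_1−2)} ⊕ ℤ/(n_1 n_2)ℤ. -/

import Mathlib

open Matrix

/-- The `k`-partite graph `G_{n 0, …, n (k-1)}` (parts indexed `0,…,k-1`, part `i` of size `n i`):
two vertices are adjacent iff they lie in consecutive parts. -/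
def kpartiteGraph (k : ℕ) (n : ℕ → ℕ) : SimpleGraph (Σ i : Fin k, Fin (n i.val)) where
  Adj v w := v.1.val + 1 = w.1.val ∨ w.1.val + 1 = v.1.val
  symm := ⟨fun v w h => Or.symm h⟩
  loopless := ⟨fun v h => by rcases h with h | h <;> omega⟩

instance (k : ℕ) (n : ℕ → ℕ) : DecidableRel (kpartiteGraph k n).Adj :=
  fun v w => inferInstanceAs (Decidable (v.1.val + 1 = w.1.val ∨ w.1.val + 1 = v.1.val))

/-- The cokernel `ℤ^m / im M` of a square integer matrix, viewed as a `ℤ`-linear map. -/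
abbrev Matrix.cokernel {m : Type*} [Fintype m] (M : Matrix m m ℤ) : Type _ :=
  (m → ℤ) ⧸ LinearMap.range M.mulVecLin

section aux
variable (n₁ n₂ : ℕ)

abbrev VV := Σ i : Fin 2, Fin (([n₁, n₂].getD i.val 0))

abbrev GG : SimpleGraph (VV n₁ n₂) := kpartiteGraph 2 (fun i => [n₁, n₂].getD i 0)

lemma sum_VV (u : VV n₁ n₂ → ℤ) :
    ∑ v, u v = (∑ a : Fin n₁, u ⟨0, a⟩) + ∑ b : Fin n₂, u ⟨1, b⟩ := by
  rw [← Finset.univ_sigma_univ, Finset.sum_sigma, Fin.sum_univ_two]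
  rfl

lemma adj_00 (a c : Fin n₁) : ¬ (GG n₁ n₂).Adj ⟨0,a⟩ ⟨0,c⟩ := by
  simp [kpartiteGraph]
lemma adj_11 (a c : Fin n₂) : ¬ (GG n₁ n₂).Adj ⟨1,a⟩ ⟨1,c⟩ := by
  simp [kpartiteGraph]
lemma adj_01 (a : Fin n₁) (b : Fin n₂) : (GG n₁ n₂).Adj ⟨0,a⟩ ⟨1,b⟩ := by
  simp [kpartiteGraph]
lemma adj_10 (b : Fin n₂) (a : Fin n₁) : (GG n₁ n₂).Adj ⟨1,b⟩ ⟨0,a⟩ := by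
  simp [kpartiteGraph]

lemma deg_A (a : Fin n₁) : (GG n₁ n₂).degree ⟨0,a⟩ = n₂ := by
  rw [← SimpleGraph.card_neighborFinset_eq_degree, SimpleGraph.neighborFinset_eq_filter]
  rw [Finset.card_filter, ← Finset.univ_sigma_univ, Finset.sum_sigma, Fin.sum_univ_two]
  show (∑ c : Fin n₁, if (GG n₁ n₂).Adj ⟨0,a⟩ ⟨0,c⟩ then 1 else 0)
    + (∑ b : Fin n₂, if (GG n₁ n₂).Adj ⟨0,a⟩ ⟨1,b⟩ then 1 else 0) = n₂
  simp [adj_00, adj_01]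

lemma deg_B (b : Fin n₂) : (GG n₁ n₂).degree ⟨1,b⟩ = n₁ := by
  rw [← SimpleGraph.card_neighborFinset_eq_degree, SimpleGraph.neighborFinset_eq_filter]
  rw [Finset.card_filter, ← Finset.univ_sigma_univ, Finset.sum_sigma, Fin.sum_univ_two]
  show (∑ c : Fin n₁, if (GG n₁ n₂).Adj ⟨1,b⟩ ⟨0,c⟩ then 1 else 0)
    + (∑ c : Fin n₂, if (GG n₁ n₂).Adj ⟨1,b⟩ ⟨1,c⟩ then 1 else 0) = n₁
  simp [adj_11, adj_10]

lemma mulVec_A (u : VV n₁ n₂ → ℤ) (a : Fin n₁) :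
    (((GG n₁ n₂).lapMatrix ℤ).mulVec u) ⟨0, a⟩
      = n₂ * u ⟨0, a⟩ - ∑ b : Fin n₂, u ⟨1, b⟩ := by
  have h : (((GG n₁ n₂).lapMatrix ℤ).mulVec u) ⟨0, a⟩
      = ∑ w : VV n₁ n₂, ((GG n₁ n₂).lapMatrix ℤ) ⟨0,a⟩ w * u w := rfl
  rw [h, ← Finset.univ_sigma_univ, Finset.sum_sigma, Fin.sum_univ_two]
  have e1 : ∀ c : Fin n₁, ((GG n₁ n₂).lapMatrix ℤ) ⟨0,a⟩ ⟨0,c⟩ * u ⟨0,c⟩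
      = (if a = c then (n₂ : ℤ) * u ⟨0,c⟩ else 0) := by
    intro c
    simp [SimpleGraph.lapMatrix, SimpleGraph.degMatrix, adj_00, deg_A, Sigma.ext_iff,
      Matrix.diagonal_apply, ite_mul]
    exact if_congr ⟨fun h => eq_of_heq (Sigma.mk.inj h).2, fun h => h ▸ rfl⟩ rfl rfl
  have e2 : ∀ b : Fin n₂, ((GG n₁ n₂).lapMatrix ℤ) ⟨0,a⟩ ⟨1,b⟩ * u ⟨1,b⟩ = - u ⟨1,b⟩ := by
    intro b
    simp [SimpleGraph.lapMatrix, SimpleGraph.degMatrix, adj_01, Sigma.ext_iff,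
      Matrix.diagonal_apply]
  show (∑ c : Fin n₁, ((GG n₁ n₂).lapMatrix ℤ) ⟨0,a⟩ ⟨0,c⟩ * u ⟨0,c⟩)
    + (∑ b : Fin n₂, ((GG n₁ n₂).lapMatrix ℤ) ⟨0,a⟩ ⟨1,b⟩ * u ⟨1,b⟩) = _
  simp only [e1, e2]
  rw [Finset.sum_ite_eq]
  simp [sub_eq_add_neg]

lemma mulVec_B (u : VV n₁ n₂ → ℤ) (b : Fin n₂) :
    (((GG n₁ n₂).lapMatrix ℤ).mulVec u) ⟨1, b⟩
      = n₁ * u ⟨1, b⟩ - ∑ a : Fin n₁, u ⟨0, a⟩ := by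
  have h : (((GG n₁ n₂).lapMatrix ℤ).mulVec u) ⟨1, b⟩
      = ∑ w : VV n₁ n₂, ((GG n₁ n₂).lapMatrix ℤ) ⟨1,b⟩ w * u w := rfl
  rw [h, ← Finset.univ_sigma_univ, Finset.sum_sigma, Fin.sum_univ_two]
  have e1 : ∀ a : Fin n₁, ((GG n₁ n₂).lapMatrix ℤ) ⟨1,b⟩ ⟨0,a⟩ * u ⟨0,a⟩ = - u ⟨0,a⟩ := by
    intro a
    simp [SimpleGraph.lapMatrix, SimpleGraph.degMatrix, adj_10, Sigma.ext_iff,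
      Matrix.diagonal_apply]
  have e2 : ∀ c : Fin n₂, ((GG n₁ n₂).lapMatrix ℤ) ⟨1,b⟩ ⟨1,c⟩ * u ⟨1,c⟩
      = (if b = c then (n₁ : ℤ) * u ⟨1,c⟩ else 0) := by
    intro c
    simp [SimpleGraph.lapMatrix, SimpleGraph.degMatrix, adj_11, deg_B, Sigma.ext_iff,
      Matrix.diagonal_apply, ite_mul]
    exact if_congr ⟨fun h => eq_of_heq (Sigma.mk.inj h).2, fun h => h ▸ rfl⟩ rfl rfl
  show (∑ c : Fin n₁, ((GG n₁ n₂).lapMatrix ℤ) ⟨1,b⟩ ⟨0,c⟩ * u ⟨0,c⟩)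
    + (∑ c : Fin n₂, ((GG n₁ n₂).lapMatrix ℤ) ⟨1,b⟩ ⟨1,c⟩ * u ⟨1,c⟩) = _
  simp only [e1, e2]
  rw [Finset.sum_ite_eq]
  simp [sub_eq_add_neg, add_comm]

/-- the target group -/
abbrev TT := ℤ × (Fin (n₂ - 2) → ZMod n₁) × (Fin (n₁ - 2) → ZMod n₂) × ZMod (n₁ * n₂)

variable (h₁ : 2 ≤ n₁) (h₂ : 2 ≤ n₂)

def psi0 : (VV n₁ n₂ → ℤ) →+ TT n₁ n₂ where
  toFun w :=
    ( ∑ v, w v,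
      fun i => (((w ⟨1, ⟨i.val+1, show i.val+1 < n₂ by have := i.isLt; omega⟩⟩ : ℤ)
                  - w ⟨1, ⟨0, show 0 < n₂ by omega⟩⟩ : ℤ) : ZMod n₁),
      fun i => (((w ⟨0, ⟨i.val+1, show i.val+1 < n₁ by have := i.isLt; omega⟩⟩ : ℤ)
                  - w ⟨0, ⟨0, show 0 < n₁ by omega⟩⟩ : ℤ) : ZMod n₂),
      (((∑ a : Fin n₁, w ⟨0,a⟩) - n₁ * w ⟨0,⟨0, show 0 < n₁ by omega⟩⟩
          + n₂ * w ⟨1,⟨0, show 0 < n₂ by omega⟩⟩ : ℤ) : ZMod (n₁*n₂)) )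
  map_zero' := by
    refine Prod.ext ?_ (Prod.ext ?_ (Prod.ext ?_ ?_)) <;> simp <;> rfl
  map_add' x y := by
    refine Prod.ext ?_ (Prod.ext ?_ (Prod.ext ?_ ?_))
    · simp [Finset.sum_add_distrib]
    · funext i; simp only [Prod.fst_add, Prod.snd_add, Pi.add_apply]; push_cast; ring
    · funext i; simp only [Prod.fst_add, Prod.snd_add, Pi.add_apply]; push_cast; ring
    · simp only [Prod.fst_add, Prod.snd_add, Pi.add_apply, Finset.sum_add_distrib]; push_cast; ring

def psi : (VV n₁ n₂ → ℤ) →ₗ[ℤ] TT n₁ n₂ := (psi0 n₁ n₂ h₁ h₂).toIntLinearMap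

lemma range_le_ker :
    LinearMap.range (((GG n₁ n₂).lapMatrix ℤ).mulVecLin) ≤ LinearMap.ker (psi n₁ n₂ h₁ h₂) := by
  rintro w ⟨u, rfl⟩
  have hL : ((GG n₁ n₂).lapMatrix ℤ).mulVecLin u = ((GG n₁ n₂).lapMatrix ℤ).mulVec u := rfl
  rw [LinearMap.mem_ker, hL]
  set S : ℤ := ∑ a : Fin n₁, u ⟨0, a⟩ with hS
  set T : ℤ := ∑ b : Fin n₂, u ⟨1, b⟩ with hT
  have hsumA : ∀ (c : ℤ), ∑ a : Fin n₁, (c * u ⟨0,a⟩ - T) = c * S - n₁ * T := by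
    intro c
    rw [Finset.sum_sub_distrib, ← Finset.mul_sum, Finset.sum_const, Finset.card_univ,
      Fintype.card_fin, nsmul_eq_mul]
  have hsumB : ∀ (c : ℤ), ∑ b : Fin n₂, (c * u ⟨1,b⟩ - S) = c * T - n₂ * S := by
    intro c
    rw [Finset.sum_sub_distrib, ← Finset.mul_sum, Finset.sum_const, Finset.card_univ,
      Fintype.card_fin, nsmul_eq_mul]
  refine Prod.ext ?_ (Prod.ext ?_ (Prod.ext ?_ ?_))
  · show ∑ v, (((GG n₁ n₂).lapMatrix ℤ).mulVec u) v = 0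
    rw [sum_VV]
    simp only [mulVec_A, mulVec_B, ← hS, ← hT]
    rw [hsumA, hsumB]; ring
  · funext i
    show ((_ - _ : ℤ) : ZMod n₁) = _
    erw [mulVec_B, mulVec_B]
    push_cast [← hS]
    simp only [Prod.snd_zero, Prod.fst_zero, Pi.zero_apply]
    push_cast [ZMod.natCast_self]
    ring
  · funext i
    show ((_ - _ : ℤ) : ZMod n₂) = _
    erw [mulVec_A, mulVec_A]
    push_cast [← hT]
    simp only [Prod.snd_zero, Prod.fst_zero, Pi.zero_apply]
    push_cast [ZMod.natCast_self]
    ring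
  · show ((_ : ℤ) : ZMod (n₁*n₂)) = _
    have e : ((∑ a : Fin n₁, (((GG n₁ n₂).lapMatrix ℤ).mulVec u) ⟨0,a⟩)
        - n₁ * (((GG n₁ n₂).lapMatrix ℤ).mulVec u) ⟨0,⟨0, show 0 < n₁ by omega⟩⟩
        + n₂ * (((GG n₁ n₂).lapMatrix ℤ).mulVec u) ⟨1,⟨0, show 0 < n₂ by omega⟩⟩ : ℤ)
        = (n₁ * n₂ : ℤ) * (u ⟨1,⟨0, show 0 < n₂ by omega⟩⟩ - u ⟨0,⟨0, show 0 < n₁ by omega⟩⟩) := by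
      simp only [mulVec_A, mulVec_B, ← hS, ← hT]
      erw [mulVec_A, mulVec_B]
      rw [hsumA]; ring
    rw [e]
    push_cast
    rw [show ((n₁ : ZMod (n₁*n₂)) * (n₂ : ZMod (n₁*n₂))) = 0 by
      rw [← Nat.cast_mul, ZMod.natCast_self], zero_mul]
    rfl

lemma ker_le_range :
    LinearMap.ker (psi n₁ n₂ h₁ h₂) ≤ LinearMap.range (((GG n₁ n₂).lapMatrix ℤ).mulVecLin) := by
  intro w hw
  have hw' : psi n₁ n₂ h₁ h₂ w = 0 := hw
  set x : Fin n₁ → ℤ := fun a => w ⟨0, a⟩ with hxdef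
  set y : Fin n₂ → ℤ := fun b => w ⟨1, b⟩ with hydef
  have hn₁0 : (0:ℕ) < n₁ := by omega
  have hn₂0 : (0:ℕ) < n₂ := by omega
  have h0 : (∑ a, x a) + (∑ b, y b) = 0 := by
    have h0' : (∑ v, w v) = 0 := congrArg Prod.fst hw'
    rwa [sum_VV] at h0'
  have h1 : ∀ i : Fin (n₂ - 2),
      (n₁:ℤ) ∣ (y ⟨i.val+1, by have := i.isLt; omega⟩ - y ⟨0, hn₂0⟩) := by
    intro i
    have hz : (((y ⟨i.val+1, by have := i.isLt; omega⟩ - y ⟨0, hn₂0⟩ : ℤ)) : ZMod n₁) = 0 :=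
      congrFun (congrArg (fun t => t.2.1) hw') i
    rwa [ZMod.intCast_zmod_eq_zero_iff_dvd] at hz
  have h2 : ∀ i : Fin (n₁ - 2),
      (n₂:ℤ) ∣ (x ⟨i.val+1, by have := i.isLt; omega⟩ - x ⟨0, hn₁0⟩) := by
    intro i
    have hz : (((x ⟨i.val+1, by have := i.isLt; omega⟩ - x ⟨0, hn₁0⟩ : ℤ)) : ZMod n₂) = 0 :=
      congrFun (congrArg (fun t => t.2.2.1) hw') i
    rwa [ZMod.intCast_zmod_eq_zero_iff_dvd] at hz
  have h3 : ((n₁ * n₂ : ℕ):ℤ) ∣ ((∑ a, x a) - n₁ * x ⟨0, hn₁0⟩ + n₂ * y ⟨0, hn₂0⟩) := by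
    have hz : ((((∑ a, x a) - n₁ * x ⟨0, hn₁0⟩ + n₂ * y ⟨0, hn₂0⟩ : ℤ)) : ZMod (n₁*n₂)) = 0 :=
      congrArg (fun t => t.2.2.2) hw'
    rwa [ZMod.intCast_zmod_eq_zero_iff_dvd] at hz
  -- all x's congruent mod n₂, all y's congruent mod n₁
  have hxmid : ∀ a : Fin n₁, a.val < n₁ - 1 → (n₂:ℤ) ∣ (x a - x ⟨0, hn₁0⟩) := by
    intro a ha
    rcases Nat.eq_zero_or_pos a.val with h | h
    · have : a = ⟨0, hn₁0⟩ := Fin.ext h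
      rw [this, sub_self]
      exact dvd_zero _
    · have hlt : a.val - 1 < n₁ - 2 := by omega
      have := h2 ⟨a.val - 1, hlt⟩
      have he : (⟨(a.val-1)+1, by omega⟩ : Fin n₁) = a := Fin.ext (by simp; omega)
      rwa [he] at this
  have hymid : ∀ b : Fin n₂, b.val < n₂ - 1 → (n₁:ℤ) ∣ (y b - y ⟨0, hn₂0⟩) := by
    intro b hb
    rcases Nat.eq_zero_or_pos b.val with h | h
    · have : b = ⟨0, hn₂0⟩ := Fin.ext h
      rw [this, sub_self]
      exact dvd_zero _
    · have hlt : b.val - 1 < n₂ - 2 := by omega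
      have := h1 ⟨b.val - 1, hlt⟩
      have he : (⟨(b.val-1)+1, by omega⟩ : Fin n₂) = b := Fin.ext (by simp; omega)
      rwa [he] at this
  have hsumx : ∑ a : Fin n₁, (x a - x ⟨0, hn₁0⟩) = (∑ a, x a) - n₁ * x ⟨0, hn₁0⟩ := by
    rw [Finset.sum_sub_distrib, Finset.sum_const, Finset.card_univ, Fintype.card_fin,
      nsmul_eq_mul]
  have hsumy : ∑ b : Fin n₂, (y b - y ⟨0, hn₂0⟩) = (∑ b, y b) - n₂ * y ⟨0, hn₂0⟩ := by
    rw [Finset.sum_sub_distrib, Finset.sum_const, Finset.card_univ, Fintype.card_fin,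
      nsmul_eq_mul]
  have hx : ∀ a : Fin n₁, (n₂:ℤ) ∣ (x a - x ⟨0, hn₁0⟩) := by
    intro a
    rcases Nat.lt_or_ge a.val (n₁ - 1) with h | h
    · exact hxmid a h
    · have halast : a = ⟨n₁ - 1, by omega⟩ := Fin.ext (by have := a.isLt; simp; omega)
      -- n₂ ∣ sum over all
      have hall : (n₂:ℤ) ∣ ∑ a : Fin n₁, (x a - x ⟨0, hn₁0⟩) := by
        rw [hsumx]
        have d1 : (n₂:ℤ) ∣ ((∑ a, x a) - n₁ * x ⟨0, hn₁0⟩ + n₂ * y ⟨0, hn₂0⟩) :=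
          dvd_trans ⟨n₁, by push_cast; ring⟩ h3
        have d2 : (n₂:ℤ) ∣ (n₂ * y ⟨0, hn₂0⟩) := Dvd.intro _ rfl
        simpa using dvd_sub d1 d2
      have herase : (n₂:ℤ) ∣ ∑ a ∈ Finset.univ.erase (⟨n₁ - 1, by omega⟩ : Fin n₁),
          (x a - x ⟨0, hn₁0⟩) := by
        refine Finset.dvd_sum ?_
        intro a ha
        have : a.val < n₁ - 1 := by
          have hne := Finset.ne_of_mem_erase ha
          have := a.isLt
          rcases Nat.lt_or_ge a.val (n₁ - 1) with h' | h'
          · exact h'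
          · exact absurd (Fin.ext (by simp; omega)) hne
        exact hxmid a this
      have hsplit := Finset.add_sum_erase Finset.univ (fun a => x a - x ⟨0, hn₁0⟩)
        (Finset.mem_univ (⟨n₁ - 1, by omega⟩ : Fin n₁))
      rw [halast]
      have := dvd_sub hall herase
      rw [← hsplit, add_sub_cancel_right] at this
      exact this
  have hy : ∀ b : Fin n₂, (n₁:ℤ) ∣ (y b - y ⟨0, hn₂0⟩) := by
    intro b
    rcases Nat.lt_or_ge b.val (n₂ - 1) with h | h
    · exact hymid b h
    · have hblast : b = ⟨n₂ - 1, by omega⟩ := Fin.ext (by have := b.isLt; simp; omega)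
      have hall : (n₁:ℤ) ∣ ∑ b : Fin n₂, (y b - y ⟨0, hn₂0⟩) := by
        rw [hsumy]
        have d1 : (n₁:ℤ) ∣ ((∑ a, x a) - n₁ * x ⟨0, hn₁0⟩ + n₂ * y ⟨0, hn₂0⟩) :=
          dvd_trans ⟨n₂, by push_cast; ring⟩ h3
        have d2 : (n₁:ℤ) ∣ (n₁ * x ⟨0, hn₁0⟩) := Dvd.intro _ rfl
        have d3 : (n₁:ℤ) ∣ ((∑ a, x a) + n₂ * y ⟨0, hn₂0⟩) := by
          have h' := dvd_add d1 d2
          have e : ((∑ a, x a) - n₁ * x ⟨0, hn₁0⟩ + n₂ * y ⟨0, hn₂0⟩) + n₁ * x ⟨0, hn₁0⟩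
              = (∑ a, x a) + n₂ * y ⟨0, hn₂0⟩ := by ring
          rwa [e] at h'
        -- Σ y - n₂ y₀ = -(Σ x + n₂ y₀) + (Σx + Σy)
        have : (∑ b, y b) - n₂ * y ⟨0, hn₂0⟩
            = ((∑ a, x a) + (∑ b, y b)) - ((∑ a, x a) + n₂ * y ⟨0, hn₂0⟩) := by ring
        rw [this, h0]
        simpa using dvd_neg.mpr d3
      have herase : (n₁:ℤ) ∣ ∑ b ∈ Finset.univ.erase (⟨n₂ - 1, by omega⟩ : Fin n₂),
          (y b - y ⟨0, hn₂0⟩) := by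
        refine Finset.dvd_sum ?_
        intro b hb
        have : b.val < n₂ - 1 := by
          have hne := Finset.ne_of_mem_erase hb
          have := b.isLt
          rcases Nat.lt_or_ge b.val (n₂ - 1) with h' | h'
          · exact h'
          · exact absurd (Fin.ext (by simp; omega)) hne
        exact hymid b this
      have hsplit := Finset.add_sum_erase Finset.univ (fun b => y b - y ⟨0, hn₂0⟩)
        (Finset.mem_univ (⟨n₂ - 1, by omega⟩ : Fin n₂))
      rw [hblast]
      have := dvd_sub hall herase
      rw [← hsplit, add_sub_cancel_right] at this
      exact this
  -- construct the preimage
  obtain ⟨k, hk⟩ := h3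
  choose p hp using hx
  choose q hq using hy
  have hcast1 : ∀ v : VV n₁ n₂, v.1.val = 0 → v.2.val < n₁ := by
    intro v h
    have hlt := v.2.isLt
    have he : [n₁, n₂].getD (v.1.val) 0 = n₁ := by rw [h]; rfl
    omega
  have hcast2 : ∀ v : VV n₁ n₂, ¬ (v.1.val = 0) → v.2.val < n₂ := by
    intro v h
    have hlt := v.2.isLt
    have h2 : v.1.val = 1 := by have := v.1.isLt; omega
    have he : [n₁, n₂].getD (v.1.val) 0 = n₂ := by rw [h2]; rfl
    omega
  set u : VV n₁ n₂ → ℤ := fun v => if h : v.1.val = 0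
      then p ⟨v.2.val, hcast1 v h⟩
      else (q ⟨v.2.val, hcast2 v h⟩) + k with hudef
  refine ⟨u, ?_⟩
  have hu0 : ∀ a : Fin n₁, u ⟨0, a⟩ = p a := fun a => rfl
  have hu1 : ∀ b : Fin n₂, u ⟨1, b⟩ = q b + k := fun b => rfl
  have hSp : (n₂:ℤ) * (∑ a, p a) = (∑ a, x a) - n₁ * x ⟨0, hn₁0⟩ := by
    rw [← hsumx, Finset.mul_sum]
    exact Finset.sum_congr rfl (fun a _ => (hp a).symm)
  have hSq : (n₁:ℤ) * (∑ b, q b) = (∑ b, y b) - n₂ * y ⟨0, hn₂0⟩ := by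
    rw [← hsumy, Finset.mul_sum]
    exact Finset.sum_congr rfl (fun b _ => (hq b).symm)
  have hk' : (∑ a, x a) - n₁ * x ⟨0, hn₁0⟩ + n₂ * y ⟨0, hn₂0⟩ = (n₁:ℤ) * n₂ * k := by
    rw [hk]; push_cast; ring
  have hn₁z : ((n₁:ℤ) ≠ 0) := Int.natCast_ne_zero.mpr hn₁0.ne'
  have hn₂z : ((n₂:ℤ) ≠ 0) := Int.natCast_ne_zero.mpr hn₂0.ne'
  have key1 : (∑ b, q b) + n₂ * k = - x ⟨0, hn₁0⟩ := by
    have hmul : (n₁:ℤ) * ((∑ b, q b) + n₂ * k) = (n₁:ℤ) * (- x ⟨0, hn₁0⟩) := by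
      linear_combination hSq - hk' + h0
    exact mul_left_cancel₀ hn₁z hmul
  have key2 : (∑ a, p a) = (n₁:ℤ) * k - y ⟨0, hn₂0⟩ := by
    have hmul : (n₂:ℤ) * (∑ a, p a) = (n₂:ℤ) * ((n₁:ℤ) * k - y ⟨0, hn₂0⟩) := by
      linear_combination hSp + hk'
    exact mul_left_cancel₀ hn₂z hmul
  -- verify
  have hsum1 : (∑ b : Fin n₂, u ⟨1, b⟩) = - x ⟨0, hn₁0⟩ := by
    have e : (∑ b : Fin n₂, u ⟨1, b⟩) = (∑ b, q b) + n₂ * k := by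
      rw [Finset.sum_congr rfl (fun b _ => hu1 b), Finset.sum_add_distrib,
        Finset.sum_const, Finset.card_univ, Fintype.card_fin, nsmul_eq_mul]
    rw [e, key1]
  have hsum0 : (∑ a : Fin n₁, u ⟨0, a⟩) = (n₁:ℤ) * k - y ⟨0, hn₂0⟩ := by
    rw [Finset.sum_congr rfl (fun a _ => hu0 a), key2]
  funext v
  obtain ⟨⟨iv, hi⟩, c⟩ := v
  interval_cases iv
  · show (((GG n₁ n₂).lapMatrix ℤ).mulVec u) ⟨0, c⟩ = w ⟨0, c⟩
    erw [mulVec_A, hu0, hsum1]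
    have := hp c
    show (n₂:ℤ) * p c - - x ⟨0, hn₁0⟩ = x c
    linarith
  · show (((GG n₁ n₂).lapMatrix ℤ).mulVec u) ⟨1, c⟩ = w ⟨1, c⟩
    erw [mulVec_B, hu1, hsum0]
    have := hq c
    show (n₁:ℤ) * (q c + k) - ((n₁:ℤ) * k - y ⟨0, hn₂0⟩) = y c
    linarith

lemma psi_surj : Function.Surjective (psi n₁ n₂ h₁ h₂) := by
  have hn₁0 : (0:ℕ) < n₁ := by omega
  have hn₂0 : (0:ℕ) < n₂ := by omega
  haveI : NeZero n₁ := ⟨by omega⟩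
  haveI : NeZero n₂ := ⟨by omega⟩
  haveI : NeZero (n₁ * n₂) := ⟨by positivity⟩
  rintro ⟨m, β, γ, δ⟩
  set xf : Fin n₁ → ℤ := fun a =>
    if h : 1 ≤ a.val ∧ a.val < n₁ - 1 then ((γ ⟨a.val - 1, by omega⟩).val : ℤ) else 0
    with hxf
  set yf : Fin n₂ → ℤ := fun b =>
    if h : 1 ≤ b.val ∧ b.val < n₂ - 1 then ((β ⟨b.val - 1, by omega⟩).val : ℤ) else 0
    with hyf
  set xs : Fin n₁ → ℤ := fun a =>
    xf a + (if a.val = n₁ - 1 then ((δ.val : ℤ) - ∑ a', xf a') else 0) with hxs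
  set ys : Fin n₂ → ℤ := fun b =>
    yf b + (if b.val = n₂ - 1 then (m - (δ.val : ℤ) - ∑ b', yf b') else 0) with hys
  have hcast1 : ∀ v : VV n₁ n₂, v.1.val = 0 → v.2.val < n₁ := by
    intro v h
    have hlt := v.2.isLt
    have he : [n₁, n₂].getD (v.1.val) 0 = n₁ := by rw [h]; rfl
    omega
  have hcast2 : ∀ v : VV n₁ n₂, ¬ (v.1.val = 0) → v.2.val < n₂ := by
    intro v h
    have hlt := v.2.isLt
    have h2 : v.1.val = 1 := by have := v.1.isLt; omega
    have he : [n₁, n₂].getD (v.1.val) 0 = n₂ := by rw [h2]; rfl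
    omega
  set w : VV n₁ n₂ → ℤ := fun v => if h : v.1.val = 0
      then xs ⟨v.2.val, hcast1 v h⟩
      else ys ⟨v.2.val, hcast2 v h⟩ with hw
  have hw0 : ∀ a : Fin n₁, w ⟨0, a⟩ = xs a := fun a => rfl
  have hw1 : ∀ b : Fin n₂, w ⟨1, b⟩ = ys b := fun b => rfl
  -- indicator sums
  have hindx : ∀ c : ℤ, ∑ a : Fin n₁, (if a.val = n₁ - 1 then c else 0) = c := by
    intro c
    have hpt : ∀ a : Fin n₁, (if a.val = n₁ - 1 then c else 0)
        = (if a = (⟨n₁-1, by omega⟩ : Fin n₁) then c else 0) := by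
      intro a
      refine if_congr ?_ rfl rfl
      constructor
      · intro h; exact Fin.ext h
      · intro h; rw [h]
    rw [Finset.sum_congr rfl (fun a _ => hpt a), Finset.sum_ite_eq' Finset.univ]
    simp
  have hindy : ∀ c : ℤ, ∑ b : Fin n₂, (if b.val = n₂ - 1 then c else 0) = c := by
    intro c
    have hpt : ∀ b : Fin n₂, (if b.val = n₂ - 1 then c else 0)
        = (if b = (⟨n₂-1, by omega⟩ : Fin n₂) then c else 0) := by
      intro b
      refine if_congr ?_ rfl rfl
      constructor
      · intro h; exact Fin.ext h
      · intro h; rw [h]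
    rw [Finset.sum_congr rfl (fun b _ => hpt b), Finset.sum_ite_eq' Finset.univ]
    simp
  have hsumxs : ∑ a, xs a = (δ.val : ℤ) := by
    rw [hxs]
    rw [Finset.sum_add_distrib, hindx]
    ring
  have hsumys : ∑ b, ys b = m - (δ.val : ℤ) := by
    rw [hys]
    rw [Finset.sum_add_distrib, hindy]
    ring
  have hxf0 : xf ⟨0, hn₁0⟩ = 0 := by
    rw [hxf]
    exact dif_neg (by simp)
  have hyf0 : yf ⟨0, hn₂0⟩ = 0 := by
    rw [hyf]
    exact dif_neg (by simp)
  have hxs0 : xs ⟨0, hn₁0⟩ = 0 := by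
    rw [hxs]
    simp only []
    rw [hxf0, if_neg (show ¬((0:ℕ) = n₁ - 1) by omega)]
    ring
  have hys0 : ys ⟨0, hn₂0⟩ = 0 := by
    rw [hys]
    simp only []
    rw [hyf0, if_neg (show ¬((0:ℕ) = n₂ - 1) by omega)]
    ring
  have hxfi : ∀ i : Fin (n₁ - 2),
      xf ⟨i.val + 1, by have := i.isLt; omega⟩ = ((γ i).val : ℤ) := by
    intro i
    have hi := i.isLt
    refine (dif_pos (show 1 ≤ i.val + 1 ∧ i.val + 1 < n₁ - 1 by omega)).trans ?_
    exact congrArg (fun j : Fin (n₁ - 2) => (((γ j).val : ℤ))) (Fin.ext (by simp))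
  have hyfi : ∀ i : Fin (n₂ - 2),
      yf ⟨i.val + 1, by have := i.isLt; omega⟩ = ((β i).val : ℤ) := by
    intro i
    have hi := i.isLt
    refine (dif_pos (show 1 ≤ i.val + 1 ∧ i.val + 1 < n₂ - 1 by omega)).trans ?_
    exact congrArg (fun j : Fin (n₂ - 2) => (((β j).val : ℤ))) (Fin.ext (by simp))
  have hxsi : ∀ i : Fin (n₁ - 2), xs ⟨i.val + 1, by have := i.isLt; omega⟩ = ((γ i).val : ℤ) := by
    intro i
    have hi := i.isLt
    rw [hxs]
    simp only []
    rw [hxfi i, if_neg (show ¬(i.val + 1 = n₁ - 1) by omega)]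
    ring
  have hysi : ∀ i : Fin (n₂ - 2), ys ⟨i.val + 1, by have := i.isLt; omega⟩ = ((β i).val : ℤ) := by
    intro i
    have hi := i.isLt
    rw [hys]
    simp only []
    rw [hyfi i, if_neg (show ¬(i.val + 1 = n₂ - 1) by omega)]
    ring
  refine ⟨w, ?_⟩
  refine Prod.ext ?_ (Prod.ext ?_ (Prod.ext ?_ ?_))
  · show (∑ v, w v) = m
    rw [sum_VV]
    rw [Finset.sum_congr rfl (fun a _ => hw0 a), Finset.sum_congr rfl (fun b _ => hw1 b),
      hsumxs, hsumys]
    ring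
  · funext i
    show (((w ⟨1, ⟨i.val+1, _⟩⟩ - w ⟨1, ⟨0, _⟩⟩ : ℤ)) : ZMod n₁) = β i
    erw [hw1, hw1, hys0, hysi i, sub_zero]
    push_cast
    simp [ZMod.natCast_val, ZMod.cast_id]
  · funext i
    show (((w ⟨0, ⟨i.val+1, _⟩⟩ - w ⟨0, ⟨0, _⟩⟩ : ℤ)) : ZMod n₂) = γ i
    erw [hw0, hw0, hxs0, hxsi i, sub_zero]
    push_cast
    simp [ZMod.natCast_val, ZMod.cast_id]
  · show ((((∑ a : Fin n₁, w ⟨0,a⟩) - n₁ * w ⟨0,⟨0, _⟩⟩ + n₂ * w ⟨1,⟨0, _⟩⟩ : ℤ)) : ZMod (n₁*n₂)) = δ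
    erw [Finset.sum_congr rfl (fun a _ => hw0 a), hw0, hw1, hxs0, hys0, hsumxs]
    push_cast
    simp [ZMod.natCast_val, ZMod.cast_id]

end aux

/-- The cokernel of the Laplacian of the complete bipartite graph `K_{n₁,n₂}`
(equivalently, the 2-partite graph `G_{n₁,n₂}`) is
`ℤ ⊕ (ℤ/n₁ℤ)^{n₂-2} ⊕ (ℤ/n₂ℤ)^{n₁-2} ⊕ ℤ/(n₁n₂)ℤ`. -/
theorem critical_group_bipartite (n₁ n₂ : ℕ) (h₁ : 2 ≤ n₁) (h₂ : 2 ≤ n₂) :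
    Nonempty (
      (((kpartiteGraph 2 (fun i => [n₁, n₂].getD i 0)).lapMatrix ℤ).cokernel)
        ≃+
      (ℤ × (Fin (n₂ - 2) → ZMod n₁) × (Fin (n₁ - 2) → ZMod n₂) × ZMod (n₁ * n₂))) := by
  have e1 : LinearMap.range (((GG n₁ n₂).lapMatrix ℤ).mulVecLin)
      = LinearMap.ker (psi n₁ n₂ h₁ h₂) :=
    le_antisymm (range_le_ker n₁ n₂ h₁ h₂) (ker_le_range n₁ n₂ h₁ h₂)
  exact ⟨((Submodule.quotEquivOfEq _ _ e1).trans
    ((psi n₁ n₂ h₁ h₂).quotKerEquivOfSurjective (psi_surj n₁ n₂ h₁ h₂))).toAddEquiv⟩
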